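/- Let K ⊆ ℝ^d be a convex set of diameter at most D > 0, T ≥ 1, α, G > 0, and let ℓ₁, …, ℓ_T : ℝ^d → ℝ be differentiable. Set γ := (1/2)·min(1/(G·D), α) and ε := 1/(γ²D²). Let μ̂₁, …, μ̂_{T+1} ∈ K and ν₁, …, ν_{T+1} ∈ K. Write ∇_t := ∇ℓ_t(μ̂_t), and define A₀ := ε·I_d, A_t := A_{t−1} + ∇_t∇_tᵀ, and μ̂_{temp,t+1} := μ̂_t − (1/γ)·A_t⁻¹∇_t. Assume: (i) ‖∇_t‖ ≤ G for all t; (ii) for every t and every x ∈ K, ℓ_t(x) ≥ ℓ_t(μ̂_t) + ⟨∇_t, x − μ̂_t⟩ + (γ/2)⟨∇_t, x − μ̂_t⟩²; (iii) for every 1 ≤ t ≤ T, the ADJUST contraction (μ̂_{t+1} − ν_{t+1})ᵀ A_t (μ̂_{t+1} − ν_{t+1}) ≤ (μ̂_{temp,t+1} − ν_t)ᵀ A_t (μ̂_{temp,t+1} − ν_t). Then Σ_{t=1}^{T} (ℓ_t(μ̂_t) − ℓ_t(ν_t)) ≤ (1/α + G·D)·(1 + Σ_{t=1}^{T} ∇_tᵀ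 A_t⁻¹ ∇_t). -/

import Mathlib

open Matrix RealInnerProductSpace Finset

/-- Reinterpret a point of `EuclideanSpace` as a plain function. -/
def donsToFun {d : ℕ} (x : EuclideanSpace ℝ (Fin d)) : Fin d → ℝ := x

lemma dons_quad {d : ℕ} (v x : Fin d → ℝ) :
    x ⬝ᵥ (Matrix.vecMulVec v v) *ᵥ x = (v ⬝ᵥ x)^2 := by
  simp only [Matrix.mulVec, dotProduct, Matrix.vecMulVec_apply, pow_two,
    Finset.sum_mul, Finset.mul_sum, Matrix.of_apply]
  rw [Finset.sum_comm]
  exact Finset.sum_congr rfl fun i _ => Finset.sum_congr rfl fun j _ => by ring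

lemma dons_vecMulVec_psd {d : ℕ} (v : Fin d → ℝ) : (Matrix.vecMulVec v v).PosSemidef := by
  refine Matrix.PosSemidef.of_dotProduct_mulVec_nonneg ?_ ?_
  · ext i j
    simp [Matrix.conjTranspose_apply, Matrix.vecMulVec_apply, mul_comm]
  · intro x
    have h : star x = x := star_trivial x
    rw [h, dons_quad]
    positivity

lemma dons_dot_symm {d : ℕ} (A : Matrix (Fin d) (Fin d) ℝ) (h : Aᵀ = A) (x y : Fin d → ℝ) :
    x ⬝ᵥ A *ᵥ y = (A *ᵥ x) ⬝ᵥ y := by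
  rw [Matrix.dotProduct_mulVec, ← Matrix.mulVec_transpose, h]

lemma dons_smul_one_posDef {d : ℕ} (ε : ℝ) (hε : 0 < ε) :
    (ε • (1 : Matrix (Fin d) (Fin d) ℝ)).PosDef := by
  refine Matrix.PosDef.of_dotProduct_mulVec_pos ?_ ?_
  · simp [Matrix.IsHermitian, Matrix.conjTranspose_smul]
  · intro x hx
    simp only [Matrix.smul_mulVec, Matrix.one_mulVec, dotProduct_smul,
      star_trivial, smul_eq_mul]
    exact mul_pos hε (Matrix.dotProduct_star_self_pos_iff.mpr hx)

lemma dons_inner_eq_dot {d : ℕ} (a b : EuclideanSpace ℝ (Fin d)) :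
    ⟪a, b⟫ = donsToFun a ⬝ᵥ donsToFun b := by
  simp [PiLp.inner_apply, dotProduct, donsToFun, mul_comm]

lemma dons_norm_sq_eq_dot {d : ℕ} (a : EuclideanSpace ℝ (Fin d)) :
    ‖a‖^2 = donsToFun a ⬝ᵥ donsToFun a := by
  rw [← real_inner_self_eq_norm_sq]
  exact dons_inner_eq_dot a a

lemma dons_step {d : ℕ} (Aprev Acur : Matrix (Fin d) (Fin d) ℝ) (γ : ℝ) (hγ : 0 < γ)
    (hcur : Acur.PosDef) (v wt wnext : Fin d → ℝ)
    (hrec : Acur = Aprev + Matrix.vecMulVec v v)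
    (hadj : wnext ⬝ᵥ Acur *ᵥ wnext ≤
      (wt - (1/γ) • (Acur⁻¹ *ᵥ v)) ⬝ᵥ Acur *ᵥ (wt - (1/γ) • (Acur⁻¹ *ᵥ v))) :
    (v ⬝ᵥ wt) - γ/2 * (v ⬝ᵥ wt)^2 ≤
      γ/2 * (wt ⬝ᵥ Aprev *ᵥ wt - wnext ⬝ᵥ Acur *ᵥ wnext) + 1/(2*γ) * (v ⬝ᵥ Acur⁻¹ *ᵥ v) := by
  have hγ' : γ ≠ 0 := ne_of_gt hγ
  have hsym : Acurᵀ = Acur := by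
    rw [← Matrix.conjTranspose_eq_transpose_of_trivial]; exact hcur.1
  have hdet : IsUnit Acur.det := isUnit_iff_ne_zero.mpr (ne_of_gt hcur.det_pos)
  have hABv : Acur *ᵥ (Acur⁻¹ *ᵥ v) = v := by
    rw [Matrix.mulVec_mulVec, Matrix.mul_nonsing_inv _ hdet, Matrix.one_mulVec]
  have h1 : wt ⬝ᵥ Acur *ᵥ ((1/γ) • (Acur⁻¹ *ᵥ v)) = (1/γ) * (v ⬝ᵥ wt) := by
    rw [Matrix.mulVec_smul, dotProduct_smul, hABv, smul_eq_mul, dotProduct_comm]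
  have h2 : ((1/γ) • (Acur⁻¹ *ᵥ v)) ⬝ᵥ Acur *ᵥ wt = (1/γ) * (v ⬝ᵥ wt) := by
    rw [smul_dotProduct, smul_eq_mul, dons_dot_symm _ hsym, hABv]
  have h3 : ((1/γ) • (Acur⁻¹ *ᵥ v)) ⬝ᵥ Acur *ᵥ ((1/γ) • (Acur⁻¹ *ᵥ v))
      = (1/γ^2) * (v ⬝ᵥ Acur⁻¹ *ᵥ v) := by
    rw [smul_dotProduct, Matrix.mulVec_smul, dotProduct_smul, hABv, smul_eq_mul,
      smul_eq_mul, dotProduct_comm]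
    ring
  have hsplit : wt ⬝ᵥ Acur *ᵥ wt = wt ⬝ᵥ Aprev *ᵥ wt + (v ⬝ᵥ wt)^2 := by
    rw [hrec, Matrix.add_mulVec, dotProduct_add, dons_quad]
  have hexpand : (wt - (1/γ) • (Acur⁻¹ *ᵥ v)) ⬝ᵥ Acur *ᵥ (wt - (1/γ) • (Acur⁻¹ *ᵥ v))
      = wt ⬝ᵥ Acur *ᵥ wt - (2/γ) * (v ⬝ᵥ wt) + (1/γ^2) * (v ⬝ᵥ Acur⁻¹ *ᵥ v) := by
    rw [sub_dotProduct, Matrix.mulVec_sub, dotProduct_sub, dotProduct_sub,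
      h1, h2, h3]
    ring
  rw [hexpand, hsplit] at hadj
  set a := v ⬝ᵥ wt
  set Q := wt ⬝ᵥ Aprev *ᵥ wt
  set N := wnext ⬝ᵥ Acur *ᵥ wnext
  set R := v ⬝ᵥ Acur⁻¹ *ᵥ v
  have h4 : γ/2 * N ≤ γ/2 * (Q + a^2 - (2/γ)*a + (1/γ^2)*R) := by
    apply mul_le_mul_of_nonneg_left _ (by positivity)
    linarith
  have h7 : γ/2 * (Q + a^2 - (2/γ)*a + (1/γ^2)*R) = γ/2*Q + γ/2*a^2 - a + 1/(2*γ)*R := by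
    field_simp
  have h8 : γ/2*(Q-N) = γ/2*Q - γ/2*N := by ring
  linarith

/-- Lemma `dynamic_ONS`: for losses satisfying the exp-concavity quadratic lower bound with
parameter `γ = (1/2)min(1/(GD), α)`, matrices `A₀ = ε I`, `A_t = A_{t−1} + ∇_t∇_tᵀ` with
`ε = 1/(γ²D²)`, and predictors satisfying the ADJUST contraction in the `A_t`-norm against the
Newton-step candidates `μ̂_t − (1/γ)A_t⁻¹∇_t`, the regret against the advice `ν` is at most
`(1/α + GD)(1 + Σ_t ∇_tᵀA_t⁻¹∇_t)`. -/
theorem dons_regret_lemma {d : ℕ}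
    (K : Set (EuclideanSpace ℝ (Fin d))) (hK : Convex ℝ K)
    (D : ℝ) (hD : 0 < D) (hdiam : ∀ x ∈ K, ∀ y ∈ K, ‖x - y‖ ≤ D)
    (T : ℕ) (hT : 1 ≤ T) (α G : ℝ) (hα : 0 < α) (hG : 0 < G)
    (ℓ : ℕ → EuclideanSpace ℝ (Fin d) → ℝ)
    (g : ℕ → EuclideanSpace ℝ (Fin d) → EuclideanSpace ℝ (Fin d))
    (hdiff : ∀ t, ∀ x, HasGradientAt (ℓ t) (g t x) x)
    (γ ε : ℝ) (hγ : γ = 1 / 2 * min (1 / (G * D)) α) (hε : ε = 1 / (γ ^ 2 * D ^ 2))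
    (p ν : ℕ → EuclideanSpace ℝ (Fin d))
    (hpK : ∀ t ∈ Icc 1 (T + 1), p t ∈ K) (hνK : ∀ t ∈ Icc 1 (T + 1), ν t ∈ K)
    (A : ℕ → Matrix (Fin d) (Fin d) ℝ)
    (hA0 : A 0 = ε • 1)
    (hArec : ∀ t ∈ Icc 1 T,
      A t = A (t - 1) + Matrix.vecMulVec (g t (p t) : Fin d → ℝ) (g t (p t) : Fin d → ℝ))
    (hGb : ∀ t ∈ Icc 1 T, ‖g t (p t)‖ ≤ G)
    (hexp : ∀ t ∈ Icc 1 T, ∀ x ∈ K,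
      ℓ t (p t) + ⟪g t (p t), x - p t⟫ + γ / 2 * ⟪g t (p t), x - p t⟫ ^ 2 ≤ ℓ t x)
    (hadj : ∀ t ∈ Icc 1 T,
      (p (t + 1) - ν (t + 1)) ⬝ᵥ (A t).mulVec (p (t + 1) - ν (t + 1)) ≤
      ((p t - (1 / γ) • (EuclideanSpace.equiv (Fin d) ℝ).symm ((A t)⁻¹.mulVec (g t (p t)))) - ν t)
        ⬝ᵥ (A t).mulVec
          ((p t - (1 / γ) • (EuclideanSpace.equiv (Fin d) ℝ).symm ((A t)⁻¹.mulVec (g t (p t))))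
            - ν t)) :
    ∑ t ∈ Icc 1 T, (ℓ t (p t) - ℓ t (ν t)) ≤
      (1 / α + G * D) * (1 + ∑ t ∈ Icc 1 T, g t (p t) ⬝ᵥ (A t)⁻¹.mulVec (g t (p t))) := by
  have hγpos : 0 < γ := by
    rw [hγ]
    have : 0 < min (1 / (G * D)) α := lt_min (by positivity) hα
    linarith
  have hγne : γ ≠ 0 := ne_of_gt hγpos
  have hεpos : 0 < ε := by rw [hε]; positivity
  -- positive definiteness of all the matrices
  have hApd : ∀ t, t ≤ T → (A t).PosDef := by
    intro t
    induction t with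
    | zero => intro _; rw [hA0]; exact dons_smul_one_posDef ε hεpos
    | succ n ih =>
      intro h
      have hn : n ≤ T := Nat.le_of_succ_le h
      have hmem : n + 1 ∈ Icc 1 T := mem_Icc.mpr ⟨Nat.succ_le_succ (Nat.zero_le n), h⟩
      have := hArec (n + 1) hmem
      rw [Nat.add_sub_cancel] at this
      rw [this]
      exact (ih hn).add_posSemidef (dons_vecMulVec_psd _)
  -- the vectors
  set w : ℕ → Fin d → ℝ := fun s => donsToFun (p s) - donsToFun (ν s) with hw
  set F : ℕ → ℝ := fun s => w (s + 1) ⬝ᵥ A s *ᵥ w (s + 1) with hF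
  -- the per-step inequality
  have hstep : ∀ t ∈ Icc 1 T,
      ℓ t (p t) - ℓ t (ν t) ≤ γ/2 * (F (t-1) - F t)
        + 1/(2*γ) * (g t (p t) ⬝ᵥ (A t)⁻¹.mulVec (g t (p t))) := by
    intro t ht
    obtain ⟨ht1, htT⟩ := mem_Icc.mp ht
    have htm : t - 1 + 1 = t := Nat.succ_pred_eq_of_pos ht1
    -- adjust hypothesis in function form
    have hadj1 : w (t+1) ⬝ᵥ A t *ᵥ w (t+1) ≤
        ((donsToFun (p t) - (1/γ) • ((A t)⁻¹ *ᵥ donsToFun (g t (p t)))) - donsToFun (ν t))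
          ⬝ᵥ (A t) *ᵥ
        ((donsToFun (p t) - (1/γ) • ((A t)⁻¹ *ᵥ donsToFun (g t (p t)))) - donsToFun (ν t)) :=
      hadj t ht
    have hadj2 : w (t+1) ⬝ᵥ A t *ᵥ w (t+1) ≤
        (w t - (1/γ) • ((A t)⁻¹ *ᵥ donsToFun (g t (p t))))
          ⬝ᵥ (A t) *ᵥ (w t - (1/γ) • ((A t)⁻¹ *ᵥ donsToFun (g t (p t)))) := by
      rw [hw]
      rwa [sub_right_comm] at hadj1
    have hrec' : A t = A (t-1) + Matrix.vecMulVec (donsToFun (g t (p t))) (donsToFun (g t (p t))) :=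
      hArec t ht
    have hkey := dons_step (A (t-1)) (A t) γ hγpos (hApd t htT)
      (donsToFun (g t (p t))) (w t) (w (t+1)) hrec' hadj2
    -- loss inequality from exp-concavity at ν t
    have hνmem : ν t ∈ K := hνK t (mem_Icc.mpr ⟨ht1, le_trans htT (Nat.le_succ T)⟩)
    have hloss := hexp t ht (ν t) hνmem
    have hin : ⟪g t (p t), ν t - p t⟫ = -(donsToFun (g t (p t)) ⬝ᵥ w t) := by
      rw [dons_inner_eq_dot]
      have : donsToFun (ν t - p t) = -(w t) := by
        rw [hw]; show donsToFun (ν t) - donsToFun (p t) = _; ring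
      rw [this, dotProduct_neg]
    rw [hin] at hloss
    have hFtm : F (t-1) = w t ⬝ᵥ A (t-1) *ᵥ w t := by rw [hF]; simp only [htm]
    have hr : (0:ℝ) ≤ 1 := zero_le_one
    have : ℓ t (p t) - ℓ t (ν t) ≤ (donsToFun (g t (p t)) ⬝ᵥ w t)
        - γ/2 * (donsToFun (g t (p t)) ⬝ᵥ w t)^2 := by nlinarith [hloss]
    calc ℓ t (p t) - ℓ t (ν t)
        ≤ (donsToFun (g t (p t)) ⬝ᵥ w t) - γ/2 * (donsToFun (g t (p t)) ⬝ᵥ w t)^2 := this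
      _ ≤ γ/2 * (w t ⬝ᵥ A (t-1) *ᵥ w t - w (t+1) ⬝ᵥ A t *ᵥ w (t+1))
            + 1/(2*γ) * (donsToFun (g t (p t)) ⬝ᵥ (A t)⁻¹ *ᵥ donsToFun (g t (p t))) := hkey
      _ = γ/2 * (F (t-1) - F t)
            + 1/(2*γ) * (g t (p t) ⬝ᵥ (A t)⁻¹.mulVec (g t (p t))) := by
          rw [hFtm]; rfl
  -- nonnegativity of the inverse quadratic forms
  have hrnn : ∀ t ∈ Icc 1 T, (0:ℝ) ≤ g t (p t) ⬝ᵥ (A t)⁻¹.mulVec (g t (p t)) := by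
    intro t ht
    have h := ((hApd t (mem_Icc.mp ht).2).inv).posSemidef.dotProduct_mulVec_nonneg (g t (p t))
    simpa using h
  have hFT : 0 ≤ F T := by
    have h := (hApd T le_rfl).posSemidef.dotProduct_mulVec_nonneg (w (T+1))
    simpa using h
  -- telescoping
  have htel : ∑ t ∈ Icc 1 T, (F (t-1) - F t) = F 0 - F T := by
    rw [← Finset.Ico_add_one_right_eq_Icc, Finset.sum_Ico_eq_sum_range]
    have h1 : ∀ i, 1 + i - 1 = i := fun i => by omega
    have h2 : ∀ i, F (1 + i) = F (i + 1) := fun i => by rw [Nat.add_comm]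
    simp only [h1, h2, Nat.add_sub_cancel]
    exact Finset.sum_range_sub' F T
  -- bound on initial term
  have hF0 : F 0 ≤ 1/γ^2 := by
    have hmem1 : (1:ℕ) ∈ Icc 1 (T+1) := mem_Icc.mpr ⟨le_refl 1, Nat.le_succ_of_le hT⟩
    have hd1 : ‖p 1 - ν 1‖ ≤ D := hdiam _ (hpK 1 hmem1) _ (hνK 1 hmem1)
    have hw1 : w 1 ⬝ᵥ w 1 = ‖p 1 - ν 1‖^2 := by
      rw [dons_norm_sq_eq_dot]; rfl
    have hF0eq : F 0 = ε * (w 1 ⬝ᵥ w 1) := by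
      rw [hF]
      simp only [zero_add, hA0, Matrix.smul_mulVec, Matrix.one_mulVec,
        dotProduct_smul, smul_eq_mul]
    rw [hF0eq, hw1]
    have hsq : ‖p 1 - ν 1‖^2 ≤ D^2 := by
      have := norm_nonneg (p 1 - ν 1)
      nlinarith
    have : ε * ‖p 1 - ν 1‖^2 ≤ ε * D^2 := mul_le_mul_of_nonneg_left hsq (le_of_lt hεpos)
    have heD : ε * D^2 = 1/γ^2 := by rw [hε]; field_simp
    linarith
  -- bound on the learning rate constant
  have h2γ : 1/(2*γ) ≤ 1/α + G*D := by
    have h2γeq : 2*γ = min (1/(G*D)) α := by rw [hγ]; ring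
    rcases le_total (1/(G*D)) α with h | h
    · rw [h2γeq, min_eq_left h, one_div_one_div]
      have : 0 < 1/α := by positivity
      linarith
    · rw [h2γeq, min_eq_right h]
      have : 0 < G*D := by positivity
      linarith
  have hsumnn : (0:ℝ) ≤ ∑ t ∈ Icc 1 T, g t (p t) ⬝ᵥ (A t)⁻¹.mulVec (g t (p t)) :=
    Finset.sum_nonneg hrnn
  -- main chain
  calc ∑ t ∈ Icc 1 T, (ℓ t (p t) - ℓ t (ν t))
      ≤ ∑ t ∈ Icc 1 T, (γ/2 * (F (t-1) - F t)
          + 1/(2*γ) * (g t (p t) ⬝ᵥ (A t)⁻¹.mulVec (g t (p t)))) := Finset.sum_le_sum hstep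
    _ = γ/2 * (F 0 - F T)
          + 1/(2*γ) * ∑ t ∈ Icc 1 T, g t (p t) ⬝ᵥ (A t)⁻¹.mulVec (g t (p t)) := by
        rw [Finset.sum_add_distrib, ← Finset.mul_sum, ← Finset.mul_sum, htel]
    _ ≤ γ/2 * (1/γ^2)
          + 1/(2*γ) * ∑ t ∈ Icc 1 T, g t (p t) ⬝ᵥ (A t)⁻¹.mulVec (g t (p t)) := by
        have hle : F 0 - F T ≤ 1/γ^2 := by linarith
        have := mul_le_mul_of_nonneg_left hle (by positivity : (0:ℝ) ≤ γ/2)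
        linarith
    _ = 1/(2*γ) * (1 + ∑ t ∈ Icc 1 T, g t (p t) ⬝ᵥ (A t)⁻¹.mulVec (g t (p t))) := by
        field_simp
    _ ≤ (1/α + G*D) * (1 + ∑ t ∈ Icc 1 T, g t (p t) ⬝ᵥ (A t)⁻¹.mulVec (g t (p t))) := by
        apply mul_le_mul_of_nonneg_right h2γ
        linarith
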